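/- arXiv:2501.05259 — 2 statements merged into one kernel-verified Lean document; each statement's English description precedes it below -/
import Mathlib

section
/- The function pop : ℤ × List ℤ × ℕ → ℤ × List ℤ × ℕ is a bijection. -/
def push : ℤ × List ℤ × ℕ → ℤ × List ℤ × ℕ
  | (v, t, 0) => (0, v::t, 0)
  | (0, v::t, c+1) => (0, v::t, c+1)
  | (u, s, c+1) => (u, s, c)

def pop : ℤ × List ℤ × ℕ → ℤ × List ℤ × ℕ
  | (0, v::t, 0) => (v, t, 0)
  | (0, v::t, c+1) => (0, v::t, c+1)
  | (u, s, c) => (u, s, c+1)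

theorem pop_bijective : Function.Bijective pop := by
  have h1 : Function.LeftInverse push pop := by
    rintro ⟨u, s, c⟩
    rcases s with _ | ⟨v, t⟩
    · rcases c with _ | c <;> simp [pop, push]
    · rcases eq_or_ne u 0 with rfl | hu
      · rcases c with _ | c
        · simp [pop, push]
        · simp [pop, push]
      · rcases c with _ | c <;> simp [pop, push, hu]
  have h2 : Function.RightInverse push pop := by
    rintro ⟨u, s, c⟩
    rcases s with _ | ⟨v, t⟩
    · rcases c with _ | c <;> simp [pop, push]
    · rcases eq_or_ne u 0 with rfl | hu
      · rcases c with _ | c <;> simp [pop, push]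
      · rcases c with _ | c <;> simp [pop, push, hu]
  exact ⟨h1.injective, h2.surjective⟩
end

section
/- The function push : ℤ × List ℤ × ℕ → ℤ × List ℤ × ℕ is a bijection. -/
lemma push_c0 (v : ℤ) (t : List ℤ) : push (v, t, 0) = (0, v::t, 0) := by
  simp only [push]

lemma push_zc (v : ℤ) (t : List ℤ) (c : ℕ) :
    push (0, v::t, c+1) = (0, v::t, c+1) := by
  simp only [push]

lemma push_ne (u : ℤ) (s : List ℤ) (c : ℕ) (h : u ≠ 0) :
    push (u, s, c+1) = (u, s, c) := by
  simp only [push]; split <;> simp_all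

lemma push_nil (u : ℤ) (c : ℕ) : push (u, [], c+1) = (u, [], c) := by
  simp only [push]

lemma pop_z0 (v : ℤ) (t : List ℤ) : pop (0, v::t, 0) = (v, t, 0) := by
  simp only [pop]

lemma pop_zc (v : ℤ) (t : List ℤ) (c : ℕ) :
    pop (0, v::t, c+1) = (0, v::t, c+1) := by
  simp only [pop]

lemma pop_ne (u : ℤ) (s : List ℤ) (c : ℕ) (h : u ≠ 0) :
    pop (u, s, c) = (u, s, c+1) := by
  simp only [pop]; split <;> simp_all

lemma pop_nil (u : ℤ) (c : ℕ) : pop (u, [], c) = (u, [], c+1) := by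
  simp only [pop]

lemma pop_push (x : ℤ × List ℤ × ℕ) : pop (push x) = x := by
  obtain ⟨u, s, c⟩ := x
  rcases c with _ | c
  · rw [push_c0, pop_z0]
  · by_cases hu : u = 0
    · subst hu
      rcases s with _ | ⟨v, t⟩
      · rw [push_nil, pop_nil]
      · rw [push_zc, pop_zc]
    · rw [push_ne u s c hu, pop_ne u s c hu]

lemma push_pop (x : ℤ × List ℤ × ℕ) : push (pop x) = x := by
  obtain ⟨u, s, c⟩ := x
  by_cases hu : u = 0
  · subst hu
    rcases s with _ | ⟨v, t⟩
    · rw [pop_nil, push_nil]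
    · rcases c with _ | c
      · rw [pop_z0, push_c0]
      · rw [pop_zc, push_zc]
  · rw [pop_ne u s c hu, push_ne u s c hu]

theorem push_bijective : Function.Bijective push := by
  rw [Function.bijective_iff_has_inverse]
  exact ⟨pop, pop_push, push_pop⟩
end
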